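/- For all integers m and n, setting x = 4(7n^2-8mn-16m^2)(13n^2+24mn+16m^2)(17n^2+40mn+16m^2), y = 3(7n^2-8mn-16m^2)(13n^2+24mn+16m^2)(17n^2+40mn+16m^2), z = 32n(n+4m)(3n+4m)(5n+4m)(13n^2+24mn+16m^2), a = 5(7n^2-8mn-16m^2)(13n^2+24mn+16m^2)(17n^2+40mn+16m^2), b = 4(13n^2+24mn+16m^2)^3, c1 = (17n^2+40mn+16m^2)(19n^2+56mn+48m^2)(33n^2+40mn+16m^2), c2 = (7n^2-8mn-16m^2)(9n^2+8mn+16m^2)(43n^2+88mn+48m^2), d1 = (17n^2+40mn+16m^2)(725n^4+2384mn^3+3808m^2n^2+3328m^3n+1280m^4), d2 = (7n^2-8mn-16m^2)(965n^4+3856mn^3+6112m^2n^2+4352m^3n+1280m^4), all seven equations hold: x^2+y^2=a^2, x^2+z^2=b^2, x^2+c1^2=d1^2, x^2+c2^2=d2^2, 2y^2+2z^2=c1^2+c2^2, 2y^2+2b^2=d1^2+d2^2, and 2a^2+2z^2=d1^2+d2^2. -/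
import Mathlib


theorem stmt_9 (m n x y z a b c1 c2 d1 d2 : ℤ)
    (hx : x = 4*(7*n^2-8*m*n-16*m^2)*(13*n^2+24*m*n+16*m^2)*(17*n^2+40*m*n+16*m^2))
    (hy : y = 3*(7*n^2-8*m*n-16*m^2)*(13*n^2+24*m*n+16*m^2)*(17*n^2+40*m*n+16*m^2))
    (hz : z = 32*n*(n+4*m)*(3*n+4*m)*(5*n+4*m)*(13*n^2+24*m*n+16*m^2))
    (ha : a = 5*(7*n^2-8*m*n-16*m^2)*(13*n^2+24*m*n+16*m^2)*(17*n^2+40*m*n+16*m^2))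
    (hb : b = 4*(13*n^2+24*m*n+16*m^2)^3)
    (hc1 : c1 = (17*n^2+40*m*n+16*m^2)*(19*n^2+56*m*n+48*m^2)*(33*n^2+40*m*n+16*m^2))
    (hc2 : c2 = (7*n^2-8*m*n-16*m^2)*(9*n^2+8*m*n+16*m^2)*(43*n^2+88*m*n+48*m^2))
    (hd1 : d1 = (17*n^2+40*m*n+16*m^2)*(725*n^4+2384*m*n^3+3808*m^2*n^2+3328*m^3*n+1280*m^4))
    (hd2 : d2 = (7*n^2-8*m*n-16*m^2)*(965*n^4+3856*m*n^3+6112*m^2*n^2+4352*m^3*n+1280*m^4)) :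
    x^2 + y^2 = a^2 ∧ x^2 + z^2 = b^2 ∧ x^2 + c1^2 = d1^2 ∧ x^2 + c2^2 = d2^2 ∧ 2*y^2 + 2*z^2 = c1^2 + c2^2 ∧ 2*y^2 + 2*b^2 = d1^2 + d2^2 ∧ 2*a^2 + 2*z^2 = d1^2 + d2^2 := by subst hx hy hz ha hb hc1 hc2 hd1 hd2; refine ⟨by ring, by ring, by ring, by ring, by ring, by ring, by ring⟩
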